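/- Let V ⊆ ℝ^{d−1} be open, let ψ : V → ℝ be twice continuously differentiable, and let v : ℝ^d → ℝ be twice continuously differentiable on an open set containing the graph {(ξ', ψ(ξ')) : ξ' ∈ V}, with v(ξ', ψ(ξ')) = 0 for every ξ' ∈ V. Let ξ̄' ∈ V satisfy ∇ψ(ξ̄') = 0, set ξ̄ = (ξ̄', ψ(ξ̄')), and assume L̄v(ξ̄) = 0. Then for every ε > 0, the function φ̃_ε(ξ) = √(ε² + ‖∇v(ξ)‖²) satisfies ∂_d φ̃_ε(ξ̄) = φ̃_ε(ξ̄)^{-1} (∂_d v(ξ̄))² (Δ'ψ(ξ̄') + ξ̄_d), where Δ'ψ = Σ_{i=1}^{d−1} ∂²_{ii} ψ. -/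

import Mathlib

open Real MeasureTheory
open scoped BigOperators RealInnerProductSpace

/-- Partial derivative in the `i`-th coordinate direction. -/
noncomputable def pd {d : ℕ} (i : Fin d) (f : EuclideanSpace ℝ (Fin d) → ℝ)
    (x : EuclideanSpace ℝ (Fin d)) : ℝ :=
  fderiv ℝ f x (EuclideanSpace.single i 1)

/-- The (Gaussian) Ornstein–Uhlenbeck operator `L̄f(x) = Δf(x) − ⟨x, ∇f(x)⟩`. -/
noncomputable def OU {d : ℕ} (f : EuclideanSpace ℝ (Fin d) → ℝ)
    (x : EuclideanSpace ℝ (Fin d)) : ℝ :=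
  (∑ i, pd i (pd i f) x) - ⟪x, gradient f x⟫

/-- The point `(ξ', t) ∈ ℝ^{d+1}` with first `d` coordinates `ξ'` and last coordinate `t`. -/
noncomputable def graphPt {d : ℕ} (ξ' : EuclideanSpace ℝ (Fin d)) (t : ℝ) :
    EuclideanSpace ℝ (Fin (d + 1)) :=
  WithLp.toLp 2 (Fin.snoc (α := fun _ => ℝ) (WithLp.ofLp ξ') t)

/-- `φ̃_ε(ξ) = √(ε² + ‖∇v(ξ)‖²)`. -/
noncomputable def phiEps {d : ℕ} (ε : ℝ) (v : EuclideanSpace ℝ (Fin d) → ℝ)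
    (x : EuclideanSpace ℝ (Fin d)) : ℝ :=
  Real.sqrt (ε ^ 2 + ‖gradient v x‖ ^ 2)

noncomputable def Jmap (d : ℕ) : EuclideanSpace ℝ (Fin d) →L[ℝ] EuclideanSpace ℝ (Fin (d+1)) :=
  LinearMap.toContinuousLinearMap
  { toFun := fun x => graphPt x 0
    map_add' := by
      intro x y
      ext i
      induction i using Fin.lastCases with
      | last => simp [graphPt, Fin.snoc_last, PiLp.add_apply]
      | cast i => simp [graphPt, Fin.snoc_castSucc, PiLp.add_apply]
    map_smul' := by
      intro c x
      ext i
      induction i using Fin.lastCases with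
      | last => simp [graphPt, Fin.snoc_last, PiLp.smul_apply]
      | cast i => simp [graphPt, Fin.snoc_castSucc, PiLp.smul_apply] }

lemma Jmap_single {d : ℕ} (i : Fin d) :
    Jmap d (EuclideanSpace.single i 1) = EuclideanSpace.single i.castSucc 1 := by
  ext j
  induction j using Fin.lastCases with
  | last =>
      simp only [Jmap, graphPt, LinearMap.coe_toContinuousLinearMap', LinearMap.coe_mk,
        AddHom.coe_mk, Fin.snoc_last, EuclideanSpace.single_apply]
      exact (if_neg (Fin.ne_of_gt (Fin.castSucc_lt_last i))).symm
  | cast j =>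
      simp [Jmap, graphPt, Fin.snoc_castSucc, EuclideanSpace.single_apply,
        Fin.castSucc_inj, Pi.single_apply]

lemma graphPt_decomp {d : ℕ} (x : EuclideanSpace ℝ (Fin d)) (t : ℝ) :
    graphPt x t = Jmap d x + t • EuclideanSpace.single (Fin.last d) 1 := by
  ext i
  induction i using Fin.lastCases with
  | last => simp [Jmap, graphPt, Fin.snoc_last, PiLp.add_apply, PiLp.smul_apply,
      EuclideanSpace.single_apply]
  | cast i => simp [Jmap, graphPt, Fin.snoc_castSucc, PiLp.add_apply, PiLp.smul_apply,
      EuclideanSpace.single_apply, Fin.ne_of_lt (Fin.castSucc_lt_last i)]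
lemma inner_gradient {d : ℕ} (f : EuclideanSpace ℝ (Fin d) → ℝ)
    (x y : EuclideanSpace ℝ (Fin d)) : ⟪gradient f x, y⟫ = fderiv ℝ f x y := by
  rw [gradient, InnerProductSpace.toDual_symm_apply]

lemma gradient_apply {d : ℕ} (f : EuclideanSpace ℝ (Fin d) → ℝ)
    (x : EuclideanSpace ℝ (Fin d)) (i : Fin d) : gradient f x i = pd i f x := by
  have := inner_gradient f x (EuclideanSpace.single i 1)
  rwa [EuclideanSpace.inner_single_right, RCLike.conj_to_real, one_mul] at this

lemma fderiv_eq_zero_of_gradient_eq_zero {d : ℕ} {f : EuclideanSpace ℝ (Fin d) → ℝ}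
    {x : EuclideanSpace ℝ (Fin d)} (h : gradient f x = 0) : fderiv ℝ f x = 0 := by
  have : (InnerProductSpace.toDual ℝ (EuclideanSpace ℝ (Fin d)))
      ((InnerProductSpace.toDual ℝ _).symm (fderiv ℝ f x)) = (InnerProductSpace.toDual ℝ _) 0 := by
    rw [← gradient, h]
  simpa using this

lemma pd_pd_eq {d : ℕ} {f : EuclideanSpace ℝ (Fin d) → ℝ} {x : EuclideanSpace ℝ (Fin d)}
    (hf : DifferentiableAt ℝ (fderiv ℝ f) x) (j k : Fin d) :
    pd k (pd j f) x = (fderiv ℝ (fderiv ℝ f) x (EuclideanSpace.single k 1))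
      (EuclideanSpace.single j 1) := by
  have : pd j f = fun y => (fderiv ℝ f y) (EuclideanSpace.single j 1) := rfl
  rw [pd, this, fderiv_clm_apply hf (differentiableAt_const _)]
  simp

noncomputable def dualToVec (d : ℕ) :
    StrongDual ℝ (EuclideanSpace ℝ (Fin d)) →L[ℝ] EuclideanSpace ℝ (Fin d) :=
  LinearMap.toContinuousLinearMap
  { toFun := fun l => (InnerProductSpace.toDual ℝ (EuclideanSpace ℝ (Fin d))).symm l
    map_add' := by intro l m; simp
    map_smul' := by intro c l; simp }
set_option maxHeartbeats 1600000 in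
theorem normal_derivative_of_phiEps_on_graph {d : ℕ}
    (V : Set (EuclideanSpace ℝ (Fin d))) (hV : IsOpen V)
    (ψ : EuclideanSpace ℝ (Fin d) → ℝ) (hψ : ContDiffOn ℝ 2 ψ V)
    (v : EuclideanSpace ℝ (Fin (d + 1)) → ℝ) (U : Set (EuclideanSpace ℝ (Fin (d + 1))))
    (hU : IsOpen U) (hgraph : ∀ ξ' ∈ V, graphPt ξ' (ψ ξ') ∈ U)
    (hv : ContDiffOn ℝ 2 v U) (hzero : ∀ ξ' ∈ V, v (graphPt ξ' (ψ ξ')) = 0)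
    (ξ' : EuclideanSpace ℝ (Fin d)) (hξ' : ξ' ∈ V) (hcrit : gradient ψ ξ' = 0)
    (hOU : OU v (graphPt ξ' (ψ ξ')) = 0) :
    ∀ ε : ℝ, 0 < ε →
      pd (Fin.last d) (phiEps ε v) (graphPt ξ' (ψ ξ')) =
        (phiEps ε v (graphPt ξ' (ψ ξ')))⁻¹ *
          (pd (Fin.last d) v (graphPt ξ' (ψ ξ'))) ^ 2 *
            ((∑ i : Fin d, pd i (pd i ψ) ξ') + ψ ξ') := by
  classical
  set xb : EuclideanSpace ℝ (Fin (d+1)) := graphPt ξ' (ψ ξ') with hxb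
  set eL : EuclideanSpace ℝ (Fin (d+1)) := EuclideanSpace.single (Fin.last d) 1 with heL
  have hxbU : xb ∈ U := hgraph ξ' hξ'
  -- differentiability preliminaries
  have hv1 : ∀ z ∈ U, DifferentiableAt ℝ v z := fun z hz =>
    (hv.contDiffAt (hU.mem_nhds hz)).differentiableAt two_ne_zero
  have hDv : DifferentiableAt ℝ (fderiv ℝ v) xb :=
    (((hv.contDiffAt (hU.mem_nhds hxbU)).fderiv_right (le_refl 2)).differentiableAt one_ne_zero)
  have hψ1 : ∀ y ∈ V, DifferentiableAt ℝ ψ y := fun y hy =>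
    (hψ.contDiffAt (hV.mem_nhds hy)).differentiableAt two_ne_zero
  have hDψ : DifferentiableAt ℝ (fderiv ℝ ψ) ξ' :=
    (((hψ.contDiffAt (hV.mem_nhds hξ')).fderiv_right (le_refl 2)).differentiableAt one_ne_zero)
  -- the graph map
  set F : EuclideanSpace ℝ (Fin d) → EuclideanSpace ℝ (Fin (d+1)) :=
    fun y => graphPt y (ψ y) with hF
  have hFy : ∀ y ∈ V, F y ∈ U := fun y hy => hgraph y hy
  have hFd : ∀ y ∈ V, HasFDerivAt F ((Jmap d) + (fderiv ℝ ψ y).smulRight eL) y := by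
    intro y hy
    have h1 : HasFDerivAt (fun z => Jmap d z + ψ z • eL)
        ((Jmap d) + (fderiv ℝ ψ y).smulRight eL) y :=
      ((Jmap d).hasFDerivAt).add (((hψ1 y hy).hasFDerivAt).smul_const eL)
    have : F = fun z => Jmap d z + ψ z • eL := by
      funext z; exact graphPt_decomp z (ψ z)
    rwa [this]
  -- first-order identity on V
  have key1 : ∀ y ∈ V, ∀ i : Fin d,
      (fderiv ℝ v (F y)) (EuclideanSpace.single i.castSucc 1)
        + (fderiv ℝ ψ y (EuclideanSpace.single i 1)) * (fderiv ℝ v (F y)) eL = 0 := by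
    intro y hy i
    have hcomp : HasFDerivAt (v ∘ F)
        ((fderiv ℝ v (F y)).comp ((Jmap d) + (fderiv ℝ ψ y).smulRight eL)) y :=
      ((hv1 _ (hFy y hy)).hasFDerivAt).comp y (hFd y hy)
    have hzero' : fderiv ℝ (v ∘ F) y = 0 := by
      have hev : (v ∘ F) =ᶠ[nhds y] (fun _ => 0) := by
        filter_upwards [hV.mem_nhds hy] with z hz using hzero z hz
      rw [hev.fderiv_eq, fderiv_fun_const]; rfl
    have := hcomp.fderiv
    rw [hzero'] at this
    have happ := congrFun (congrArg (fun (L : _ →L[ℝ] ℝ) => (L : _ → ℝ)) this.symm)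
      (EuclideanSpace.single i 1)
    simpa [ContinuousLinearMap.comp_apply, ContinuousLinearMap.add_apply,
      ContinuousLinearMap.smulRight_apply, Jmap_single, map_add, _root_.map_smul,
      smul_eq_mul, mul_comm] using happ
  -- vanishing tangential gradient of ψ at ξ'
  have hpdψ0 : ∀ i : Fin d, (fderiv ℝ ψ ξ') (EuclideanSpace.single i 1) = 0 := by
    intro i
    rw [fderiv_eq_zero_of_gradient_eq_zero hcrit]; rfl
  have hfψ0 : fderiv ℝ ψ ξ' = 0 := fderiv_eq_zero_of_gradient_eq_zero hcrit
  have hFξ : F ξ' = xb := rfl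
  -- tangential derivatives of v vanish at xb
  have htang : ∀ i : Fin d, (fderiv ℝ v xb) (EuclideanSpace.single i.castSucc 1) = 0 := by
    intro i
    have := key1 ξ' hξ' i
    rw [hFξ, hpdψ0 i, zero_mul, add_zero] at this
    exact this
  -- gradient of v at xb points in the last direction
  have hgrad : gradient v xb = (fderiv ℝ v xb eL) • eL := by
    ext j
    induction j using Fin.lastCases with
    | last =>
        rw [gradient_apply]
        simp [heL, pd, PiLp.smul_apply, EuclideanSpace.single_apply, smul_eq_mul]
    | cast j =>
        rw [gradient_apply]
        have : pd j.castSucc v xb = 0 := htang j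
        rw [this]
        simp [heL, PiLp.smul_apply, EuclideanSpace.single_apply,
          Fin.ne_of_lt (Fin.castSucc_lt_last j), smul_eq_mul]
  -- second-order identity: pure second derivatives of v in tangential directions
  have hKi : ∀ i : Fin d,
      (fderiv ℝ (fderiv ℝ v) xb (EuclideanSpace.single i.castSucc 1))
          (EuclideanSpace.single i.castSucc 1)
        + (fderiv ℝ (fderiv ℝ ψ) ξ' (EuclideanSpace.single i 1))
            (EuclideanSpace.single i 1) * (fderiv ℝ v xb eL) = 0 := by
    intro i
    set ui : EuclideanSpace ℝ (Fin d) := EuclideanSpace.single i 1 with hui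
    set wi : EuclideanSpace ℝ (Fin (d+1)) := EuclideanSpace.single i.castSucc 1 with hwi
    have c1 : HasFDerivAt (fun z => (fderiv ℝ v z) wi)
        ((fderiv ℝ v xb).comp (0 : EuclideanSpace ℝ (Fin (d+1)) →L[ℝ]
            EuclideanSpace ℝ (Fin (d+1)))
          + (fderiv ℝ (fderiv ℝ v) xb).flip wi) xb :=
      hDv.hasFDerivAt.clm_apply (hasFDerivAt_const wi xb)
    have c1' : HasFDerivAt (fun z => (fderiv ℝ v z) eL)
        ((fderiv ℝ v xb).comp (0 : EuclideanSpace ℝ (Fin (d+1)) →L[ℝ]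
            EuclideanSpace ℝ (Fin (d+1)))
          + (fderiv ℝ (fderiv ℝ v) xb).flip eL) xb :=
      hDv.hasFDerivAt.clm_apply (hasFDerivAt_const eL xb)
    have cA : HasFDerivAt (fun y => (fderiv ℝ v (F y)) wi)
        (((fderiv ℝ v xb).comp (0 : EuclideanSpace ℝ (Fin (d+1)) →L[ℝ]
            EuclideanSpace ℝ (Fin (d+1)))
          + (fderiv ℝ (fderiv ℝ v) xb).flip wi).comp
            ((Jmap d) + (fderiv ℝ ψ ξ').smulRight eL)) ξ' :=
      by have := c1.comp ξ' (hFd ξ' hξ'); exact this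
    have cv : HasFDerivAt (fun y => (fderiv ℝ v (F y)) eL)
        (((fderiv ℝ v xb).comp (0 : EuclideanSpace ℝ (Fin (d+1)) →L[ℝ]
            EuclideanSpace ℝ (Fin (d+1)))
          + (fderiv ℝ (fderiv ℝ v) xb).flip eL).comp
            ((Jmap d) + (fderiv ℝ ψ ξ').smulRight eL)) ξ' :=
      by have := c1'.comp ξ' (hFd ξ' hξ'); exact this
    have cψ : HasFDerivAt (fun y => (fderiv ℝ ψ y) ui)
        ((fderiv ℝ ψ ξ').comp (0 : EuclideanSpace ℝ (Fin d) →L[ℝ] EuclideanSpace ℝ (Fin d))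
          + (fderiv ℝ (fderiv ℝ ψ) ξ').flip ui) ξ' :=
      hDψ.hasFDerivAt.clm_apply (hasFDerivAt_const ui ξ')
    have cB := cψ.mul cv
    have hsum := cA.add cB
    have h0 : fderiv ℝ (fun y => (fderiv ℝ v (F y)) wi
        + (fderiv ℝ ψ y) ui * (fderiv ℝ v (F y)) eL) ξ' = 0 := by
      have hev : (fun y => (fderiv ℝ v (F y)) wi
          + (fderiv ℝ ψ y) ui * (fderiv ℝ v (F y)) eL) =ᶠ[nhds ξ'] (fun _ => 0) := by
        filter_upwards [hV.mem_nhds hξ'] with z hz using key1 z hz i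
      rw [hev.fderiv_eq, fderiv_fun_const]; rfl
    have hfd := hsum.fderiv
    erw [h0] at hfd
    have happ := congrFun (congrArg (fun (L : _ →L[ℝ] ℝ) => (L : _ → ℝ)) hfd.symm) ui
    simpa [ContinuousLinearMap.comp_apply, ContinuousLinearMap.add_apply,
      ContinuousLinearMap.flip_apply, ContinuousLinearMap.smulRight_apply,
      ContinuousLinearMap.smul_apply, ContinuousLinearMap.zero_apply,
      Jmap_single, map_add, _root_.map_smul, smul_eq_mul, hpdψ0 i, mul_comm, hui, hwi, hFξ] using happ
  set D : ℝ := fderiv ℝ v xb eL with hD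
  have hinner : ⟪xb, gradient v xb⟫ = D * ψ ξ' := by
    rw [hgrad, real_inner_smul_right]
    have h1 : ⟪xb, eL⟫ = xb (Fin.last d) := by
      rw [heL, EuclideanSpace.inner_single_right]; simp
    have h2 : xb (Fin.last d) = ψ ξ' := by
      simp [hxb, graphPt, Fin.snoc_last]
    rw [h1, h2, mul_comm]
  have hOUsum : (∑ j, pd j (pd j v) xb) = D * ψ ξ' := by
    have h := hOU
    rw [OU, hinner, sub_eq_zero] at h
    exact h
  have e1 : ∀ i : Fin d, pd i.castSucc (pd i.castSucc v) xb
      = -(pd i (pd i ψ) ξ' * D) := by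
    intro i
    rw [pd_pd_eq hDv, pd_pd_eq hDψ]
    have := hKi i
    linarith
  have hlast2 : (fderiv ℝ (fderiv ℝ v) xb eL) eL
      = D * ((∑ i : Fin d, pd i (pd i ψ) ξ') + ψ ξ') := by
    rw [Fin.sum_univ_castSucc (f := fun j => pd j (pd j v) xb)] at hOUsum
    simp only [e1] at hOUsum
    have e2 : pd (Fin.last d) (pd (Fin.last d) v) xb
        = (fderiv ℝ (fderiv ℝ v) xb eL) eL := by
      rw [pd_pd_eq hDv, heL]
    rw [e2] at hOUsum
    have e3 : (∑ i : Fin d, -(pd i (pd i ψ) ξ' * D))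
        = -((∑ i : Fin d, pd i (pd i ψ) ξ') * D) := by
      rw [Finset.sum_neg_distrib, ← Finset.sum_mul]
    rw [e3] at hOUsum
    linarith [hOUsum]
  -- Step 7: differentiate phiEps
  intro ε hε
  set A : StrongDual ℝ (EuclideanSpace ℝ (Fin (d+1))) →L[ℝ] EuclideanSpace ℝ (Fin (d+1)) :=
    dualToVec (d+1) with hA
  set D2 := fderiv ℝ (fderiv ℝ v) xb with hD2
  set G : EuclideanSpace ℝ (Fin (d+1)) →L[ℝ] EuclideanSpace ℝ (Fin (d+1)) := A.comp D2 with hG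
  have hgge : (fun x => gradient v x) = fun x => A (fderiv ℝ v x) := rfl
  have hg : HasFDerivAt (fun x => gradient v x) G xb := by
    rw [hgge]
    exact A.hasFDerivAt.comp xb hDv.hasFDerivAt
  have hAapp : ∀ (l : StrongDual ℝ (EuclideanSpace ℝ (Fin (d+1))))
      (w : EuclideanSpace ℝ (Fin (d+1))), ⟪A l, w⟫ = l w := by
    intro l w
    show ⟪(InnerProductSpace.toDual ℝ (EuclideanSpace ℝ (Fin (d+1)))).symm l, w⟫ = l w
    exact InnerProductSpace.toDual_symm_apply
  have hinner2 : ⟪gradient v xb, G eL⟫ = D * ((D2 eL) eL) := by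
    rw [hgrad, real_inner_smul_left]
    congr 1
    rw [hG, ContinuousLinearMap.comp_apply, real_inner_comm, hAapp]
  have hu : HasFDerivAt (fun x => ε^2 + ⟪gradient v x, gradient v x⟫)
      ((fderivInnerCLM ℝ (gradient v xb, gradient v xb)).comp (G.prod G)) xb :=
    (hg.inner ℝ hg).const_add (ε^2)
  have hne : ε^2 + ⟪gradient v xb, gradient v xb⟫ ≠ 0 := by
    have h1 : (0:ℝ) < ε^2 := by positivity
    have h2 : (0:ℝ) ≤ ⟪gradient v xb, gradient v xb⟫ := real_inner_self_nonneg
    linarith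
  have hsq : phiEps ε v = fun x => Real.sqrt (ε^2 + ⟪gradient v x, gradient v x⟫) := by
    funext x
    rw [phiEps, real_inner_self_eq_norm_sq]
  have hφder := hu.sqrt hne
  have hval : pd (Fin.last d) (phiEps ε v) xb
      = (1 / (2 * Real.sqrt (ε^2 + ⟪gradient v xb, gradient v xb⟫)))
        * (⟪gradient v xb, G eL⟫ + ⟪G eL, gradient v xb⟫) := by
    have hfd : fderiv ℝ (phiEps ε v) xb
        = (1 / (2 * Real.sqrt (ε^2 + ⟪gradient v xb, gradient v xb⟫)))
          • ((fderivInnerCLM ℝ (gradient v xb, gradient v xb)).comp (G.prod G)) := by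
      rw [hsq]; exact hφder.fderiv
    rw [pd, hfd, ContinuousLinearMap.smul_apply, ContinuousLinearMap.comp_apply,
      ContinuousLinearMap.prod_apply, fderivInnerCLM_apply, ← heL, smul_eq_mul]
  have hφeq : phiEps ε v xb = Real.sqrt (ε^2 + ⟪gradient v xb, gradient v xb⟫) := by
    rw [hsq]
  have hφpos : 0 < phiEps ε v xb := by
    rw [hφeq]
    apply Real.sqrt_pos.2
    have h2 : (0:ℝ) ≤ ⟪gradient v xb, gradient v xb⟫ := real_inner_self_nonneg
    positivity
  have hDpd : pd (Fin.last d) v xb = D := rfl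
  rw [hval, ← hφeq, hDpd, hinner2, real_inner_comm (gradient v xb) (G eL), hinner2, hlast2]
  field_simp
  ring
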